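/- Assume conditions (P0)–(P3) hold for the sequence (q_{M_L}, φ_{M_L}) indexed by even positive integers L, and assume M_L² / log L → ∞ as L → ∞. Define G_L(x, λ) = (1/L²) ∑_{y ∈ T_L} e^{2πi x·y / L} / (1 + λ − φ_{M_L}(2π y / L)) for x ∈ T_L and λ > 0. Then for every λ > 0, lim_{L→∞} sup_{x ∈ T'_L} |G_L(x, λ/L²) / G_L(0, λ/L²) − (1 + λ)^{−1}| = 0. (For the rate-one continuous-time random walk X^L on the torus T_L with jump distribution q_{M_L} and H_L the hitting time of 0, the ratio G_L(x,λ)/G_L(0,λ) equals E_x(e^{−λ H_L}), so this is the homogeneous-mixing exponential limit law of Theorem 1.2.) -/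

import Mathlib

open Filter MeasureTheory Real Finset
open scoped BigOperators

noncomputable section

/-- `T_k = (−k/2, k/2]² ∩ ℤ²`. -/
def Tset (k : ℝ) : Finset (ℤ × ℤ) :=
  Finset.Ioc ⌊-k / 2⌋ ⌊k / 2⌋ ×ˢ Finset.Ioc ⌊-k / 2⌋ ⌊k / 2⌋

/-- `Λ_k = [−k/2, k/2]² ∩ ℤ²`. -/
def Lam (k : ℝ) : Finset (ℤ × ℤ) :=
  Finset.Icc ⌈-k / 2⌉ ⌊k / 2⌋ ×ˢ Finset.Icc ⌈-k / 2⌉ ⌊k / 2⌋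

open scoped Classical in
/-- `D_k = {x ∈ ℤ² : |x| ≤ k/2}` (Euclidean norm). -/
def Dset (k : ℝ) : Finset (ℤ × ℤ) :=
  (Lam k).filter fun x => Real.sqrt ((x.1 : ℝ) ^ 2 + (x.2 : ℝ) ^ 2) ≤ k / 2

/-- sup (ℓ∞) norm on ℝ². -/
def supNorm (θ : ℝ × ℝ) : ℝ := max |θ.1| |θ.2|

/-- the closed ℓ∞-ball `B(r)` in ℝ². -/
def Bset (r : ℝ) : Set (ℝ × ℝ) := {θ | supNorm θ ≤ r}

/-- squared Euclidean norm `|θ|²` on ℝ². -/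
def sqNormR (θ : ℝ × ℝ) : ℝ := θ.1 ^ 2 + θ.2 ^ 2

/-- squared Euclidean norm `|y|²` of a lattice point. -/
def sqNorm (y : ℤ × ℤ) : ℝ := (y.1 : ℝ) ^ 2 + (y.2 : ℝ) ^ 2

/-- dot product `θ · x` of θ ∈ ℝ² and x ∈ ℤ². -/
def dotP (θ : ℝ × ℝ) (x : ℤ × ℤ) : ℝ := θ.1 * x.1 + θ.2 * x.2

/-- `e^{iθ·x}`. -/
def cexp (θ : ℝ × ℝ) (x : ℤ × ℤ) : ℂ := Complex.exp (Complex.I * (dotP θ x : ℂ))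

/-- `e^{2πi x·y/L}`. -/
def eL (L : ℕ) (x y : ℤ × ℤ) : ℂ :=
  Complex.exp (2 * (π : ℂ) * Complex.I * ((x.1 * y.1 + x.2 * y.2 : ℤ) : ℂ) / (L : ℂ))

/-- the filter of large even natural numbers. -/
def evenAtTop : Filter ℕ := Filter.atTop ⊓ Filter.principal {n | Even n}

/-- the Fourier point `2πy/L ∈ ℝ²`. -/
def fourierTheta (L : ℕ) (y : ℤ × ℤ) : ℝ × ℝ := (2 * π * y.1 / L, 2 * π * y.2 / L)

/-- the characteristic function `φ(θ) = ∑_x e^{iθ·x} q(x)` of a jump distribution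
supported in `Λ_m`; it is real-valued by symmetry, so we take the real part. -/
def phiOf (m : ℕ) (qq : ℤ × ℤ → ℝ) (θ : ℝ × ℝ) : ℝ :=
  (∑ x ∈ Lam m, cexp θ x * (qq x : ℂ)).re

/-- Condition (P0): `q` is a symmetric probability distribution supported in
`Λ'_m = Λ_m \ {0}`, with values in [0,1] and equal, positive coordinate variances. -/
def CondP0 (m : ℕ) (qq : ℤ × ℤ → ℝ) : Prop :=
  (∀ x, 0 ≤ qq x ∧ qq x ≤ 1) ∧
  (∀ x, x ∉ (Lam m).erase 0 → qq x = 0) ∧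
  (∑ x ∈ (Lam m).erase 0, qq x = 1) ∧
  (∀ x, qq (-x) = qq x) ∧
  (∑ x ∈ Lam m, (x.1 : ℝ) ^ 2 * qq x = ∑ x ∈ Lam m, (x.2 : ℝ) ^ 2 * qq x) ∧
  (0 < ∑ x ∈ Lam m, (x.1 : ℝ) ^ 2 * qq x)

/-- Condition (P1) with constant `σ² = σ2`. -/
def CondP1 (M : ℕ → ℕ) (q : ℕ → ℤ × ℤ → ℝ) (σ2 : ℝ) : Prop :=
  ∀ ε > (0 : ℝ), ∃ δ > (0 : ℝ), ∀ᶠ (L : ℕ) in evenAtTop, ∀ θ : ℝ × ℝ, θ ≠ 0 →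
    supNorm θ ≤ δ / M L →
    (1 - phiOf (M L) (q L) θ) / (σ2 * (M L : ℝ) ^ 2 * sqNormR θ / 2)
      ∈ Set.Ioo (1 - ε) (1 + ε)

/-- Condition (P2). -/
def CondP2 (M : ℕ → ℕ) (q : ℕ → ℤ × ℤ → ℝ) : Prop :=
  ∀ δ > (0 : ℝ), ∃ δ' > (0 : ℝ), ∃ ζ > (0 : ℝ), ∀ᶠ (L : ℕ) in evenAtTop, ∀ θ : ℝ × ℝ,
    supNorm θ ≤ δ' → ¬ supNorm θ ≤ δ / M L → 1 - phiOf (M L) (q L) θ > ζ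

/-- Condition (P3). -/
def CondP3 (M : ℕ → ℕ) (q : ℕ → ℤ × ℤ → ℝ) : Prop :=
  ∀ ε > (0 : ℝ), ∀ a > (0 : ℝ), ∀ᶠ (L : ℕ) in evenAtTop, ∀ θ : ℝ × ℝ,
    supNorm θ ≤ π → ¬ supNorm θ ≤ a → |phiOf (M L) (q L) θ| < ε

/-- `G_L(x,λ) = L⁻² ∑_{y ∈ T_L} e^{2πi x·y/L} / (1 + λ − φ_{M_L}(2πy/L))`. -/
def Gfun (M : ℕ → ℕ) (q : ℕ → ℤ × ℤ → ℝ) (L : ℕ) (x : ℤ × ℤ) (lam : ℝ) : ℂ :=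
  ((L : ℂ) ^ 2)⁻¹ * ∑ y ∈ Tset L,
    eL L x y / ((1 + lam - phiOf (M L) (q L) (fourierTheta L y) : ℝ) : ℂ)

open scoped Classical in
/-- the annulus `A_L(α, v)`. -/
def Aset (L : ℕ) (α v : ℝ) : Finset (ℤ × ℤ) :=
  if α = 0 then (Tset v).erase 0
  else if α = 1 then Tset L \ Tset (L / v)
  else Tset ((L : ℝ) ^ α * v) \ Tset ((L : ℝ) ^ α / v)

/-- the uniform distribution `u_m` on `Λ'_m = Λ_m \ {0}`. -/
def uunif (m : ℕ) (x : ℤ × ℤ) : ℝ :=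
  if x ∈ (Lam m).erase 0 then (((Lam m).erase 0).card : ℝ)⁻¹ else 0

/-- `q_M(x) = c_M f(x/M) u_M(x)`. -/
def qMf (f : ℝ × ℝ → ℝ) (c : ℕ → ℝ) (m : ℕ) (x : ℤ × ℤ) : ℝ :=
  c m * f ((x.1 : ℝ) / m, (x.2 : ℝ) / m) * uunif m x

section Helpers

lemma Tset_two_mul (k : ℕ) : Tset (2*k : ℕ) = Finset.Ioc (-(k:ℤ)) k ×ˢ Finset.Ioc (-(k:ℤ)) k := by
  have h1 : ⌊((2*k : ℕ) : ℝ) / 2⌋ = (k : ℤ) := by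
    have : ((2*k : ℕ) : ℝ) / 2 = ((k:ℤ) : ℝ) := by push_cast; ring
    rw [this, Int.floor_intCast]
  have h2 : ⌊-((2*k : ℕ) : ℝ) / 2⌋ = -(k : ℤ) := by
    have : -((2*k : ℕ) : ℝ) / 2 = ((-(k:ℤ) : ℤ) : ℝ) := by push_cast; ring
    rw [this, Int.floor_intCast]
  rw [Tset, h1, h2]

lemma card_Tset_two_mul (k : ℕ) : (Tset (2*k : ℕ)).card = (2*k)^2 := by
  rw [Tset_two_mul, Finset.card_product, Int.card_Ioc]
  have : (k:ℤ) - (-(k:ℤ)) = (2*k : ℕ) := by push_cast; ring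
  rw [this, Int.toNat_natCast]
  ring

lemma zero_mem_Tset (k : ℕ) (hk : 0 < k) : (0 : ℤ×ℤ) ∈ Tset (2*k : ℕ) := by
  rw [Tset_two_mul]
  simp [Finset.mem_product]
  omega

lemma norm_eL (L : ℕ) (x y : ℤ×ℤ) : ‖eL L x y‖ = 1 := by
  rw [eL]
  have : 2 * (π : ℂ) * Complex.I * ((x.1 * y.1 + x.2 * y.2 : ℤ) : ℂ) / (L : ℂ)
      = ((2 * π * ((x.1 * y.1 + x.2 * y.2 : ℤ) : ℝ) / (L : ℝ) : ℝ) : ℂ) * Complex.I := by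
    push_cast; ring
  rw [this, Complex.norm_exp_ofReal_mul_I]

lemma eL_zero_right (L : ℕ) (x : ℤ×ℤ) : eL L x 0 = 1 := by
  simp [eL]

lemma eL_zero_left (L : ℕ) (y : ℤ×ℤ) : eL L 0 y = 1 := by
  simp [eL]

end Helpers
section Phi

lemma norm_cexp (θ : ℝ×ℝ) (x : ℤ×ℤ) : ‖cexp θ x‖ = 1 := by
  rw [cexp]
  have : Complex.I * ((dotP θ x : ℝ) : ℂ) = ((dotP θ x : ℝ) : ℂ) * Complex.I := by ring
  rw [this, Complex.norm_exp_ofReal_mul_I]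

lemma abs_phiOf_le_one (m : ℕ) (qq : ℤ×ℤ → ℝ) (h : CondP0 m qq) (θ : ℝ×ℝ) :
    |phiOf m qq θ| ≤ 1 := by
  obtain ⟨hq01, hsupp, hsum, -, -, -⟩ := h
  rw [phiOf]
  calc |(∑ x ∈ Lam m, cexp θ x * (qq x : ℂ)).re|
      ≤ ‖∑ x ∈ Lam m, cexp θ x * (qq x : ℂ)‖ := Complex.abs_re_le_norm _
    _ ≤ ∑ x ∈ Lam m, ‖cexp θ x * (qq x : ℂ)‖ := norm_sum_le _ _
    _ = ∑ x ∈ Lam m, qq x := by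
        apply Finset.sum_congr rfl
        intro x _
        rw [norm_mul, norm_cexp, one_mul, Complex.norm_real, Real.norm_eq_abs,
          abs_of_nonneg (hq01 x).1]
    _ = 1 := by
        rw [← hsum]
        by_cases h0 : (0:ℤ×ℤ) ∈ Lam m
        · rw [← Finset.add_sum_erase _ _ h0]
          have : qq 0 = 0 := hsupp 0 (fun hc => (Finset.notMem_erase 0 _) hc)
          rw [this, zero_add]
        · apply Finset.sum_congr
          · ext x; simp only [Finset.mem_erase]
            constructor
            · intro hx; exact ⟨fun he => h0 (he ▸ hx), hx⟩
            · intro hx; exact hx.2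
          · intro x _; rfl

lemma sum_Lam_eq (m : ℕ) (qq : ℤ×ℤ → ℝ) (h : CondP0 m qq) (f : ℤ×ℤ → ℂ) :
    ∑ x ∈ Lam m, f x * (qq x : ℂ) = ∑ x ∈ (Lam m).erase 0, f x * (qq x : ℂ) := by
  by_cases h0 : (0:ℤ×ℤ) ∈ Lam m
  · rw [← Finset.add_sum_erase _ _ h0]
    have : qq 0 = 0 := h.2.1 0 (fun hc => (Finset.notMem_erase 0 _) hc)
    rw [this]; push_cast; ring_nf
  · apply Finset.sum_congr
    · ext x; simp only [Finset.mem_erase]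
      exact ⟨fun hx => ⟨fun he => h0 (he ▸ hx), hx⟩, fun hx => hx.2⟩
    · intro x _; rfl

lemma phiOf_zero (m : ℕ) (qq : ℤ×ℤ → ℝ) (h : CondP0 m qq) : phiOf m qq (0,0) = 1 := by
  rw [phiOf, sum_Lam_eq m qq h]
  have : ∀ x ∈ (Lam m).erase 0, cexp (0,0) x * (qq x : ℂ) = (qq x : ℂ) := by
    intro x _
    rw [cexp]
    simp [dotP]
  rw [Finset.sum_congr rfl this]
  rw [← Complex.ofReal_sum, Complex.ofReal_re, h.2.2.1]

end Phi
section CharSum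

lemma zpow_sum_Ioc (ω : ℂ) (hω0 : ω ≠ 0) (hω1 : ω ≠ 1) (n : ℕ) (hn : ω ^ n = 1) (a : ℤ) :
    ∑ t ∈ Finset.Ioc a (a + n), ω ^ t = 0 := by
  have hmap : Finset.Ioc a (a + n) = (Finset.range n).map
      ⟨fun i : ℕ => a + 1 + (i:ℤ), (show Function.Injective (fun i : ℕ => a + 1 + (i:ℤ)) from by intro i j h; simpa using h)⟩ := by
    ext t
    simp only [Finset.mem_Ioc, Finset.mem_map, Finset.mem_range, Function.Embedding.coeFn_mk]
    constructor
    · intro ⟨h1, h2⟩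
      refine ⟨(t - a - 1).toNat, by omega, by omega⟩
    · intro ⟨i, hi, he⟩
      omega
  rw [hmap, Finset.sum_map]
  simp only [Function.Embedding.coeFn_mk]
  have : ∀ i ∈ Finset.range n, ω ^ (a + 1 + (i:ℤ)) = ω ^ (a+1) * ω ^ i := by
    intro i _
    rw [zpow_add₀ hω0, zpow_natCast]
  rw [Finset.sum_congr rfl this, ← Finset.mul_sum, geom_sum_eq hω1, hn]
  simp

example (hn : (3:ℂ) = 4) : True := trivial

lemma exp_unit_sum (L : ℕ) (hL : 0 < L) (m : ℤ) (hm1 : -(L:ℤ) < 2*m) (hm2 : 2*m ≤ L)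
    (hm : m ≠ 0) (a : ℤ) :
    ∑ t ∈ Finset.Ioc a (a + L), Complex.exp (2 * (π:ℂ) * Complex.I * m * t / L) = 0 := by
  set ω : ℂ := Complex.exp (2 * (π:ℂ) * Complex.I * m / L) with hω
  have hL0 : (L:ℂ) ≠ 0 := by exact_mod_cast Nat.cast_ne_zero.mpr hL.ne'
  have h2pi : (2:ℂ) * π * Complex.I ≠ 0 := by
    simp [Real.pi_ne_zero, Complex.I_ne_zero, Complex.ofReal_ne_zero]
  have hω0 : ω ≠ 0 := Complex.exp_ne_zero _
  have hω1 : ω ≠ 1 := by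
    intro hc
    rw [hω, Complex.exp_eq_one_iff] at hc
    obtain ⟨n, hn⟩ := hc
    have hmc : (m : ℂ) = n * L := by
      have := congrArg (fun z => z * L / (2 * (π:ℂ) * Complex.I)) hn
      field_simp at this
      have h4 : (m:ℂ) * (2*(π:ℂ)*Complex.I) = ((n*L : ℤ):ℂ) * (2*(π:ℂ)*Complex.I) := by
        push_cast at this ⊢
        linear_combination (2*(π:ℂ)*Complex.I) * this
      have := mul_right_cancel₀ h2pi h4
      exact_mod_cast this
    have hmz : m = n * L := by exact_mod_cast hmc
    have hL1 : (1:ℤ) ≤ L := by exact_mod_cast hL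
    rcases lt_trichotomy n 0 with h | h | h
    · have hn1 : n ≤ -1 := by omega
      have h5 : m ≤ -1 * L := by
        calc m = n * L := hmz
          _ ≤ -1 * L := by apply mul_le_mul_of_nonneg_right hn1 (by positivity)
      have h6 : m ≤ -L := by linarith
      linarith
    · subst h; simp at hmz; exact hm hmz
    · have hn1 : 1 ≤ n := by omega
      have h5 : 1 * L ≤ m := by
        calc (1:ℤ) * L ≤ n * L := by apply mul_le_mul_of_nonneg_right hn1 (by positivity)
          _ = m := hmz.symm
      have h6 : (L:ℤ) ≤ m := by linarith
      linarith
  have hωn : ω ^ L = 1 := by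
    rw [hω, ← Complex.exp_nat_mul]
    have : (L:ℂ) * (2 * π * Complex.I * m / L) = m * (2 * π * Complex.I) := by
      field_simp
    rw [this, Complex.exp_int_mul_two_pi_mul_I]
  have : ∀ t ∈ Finset.Ioc a (a + L), Complex.exp (2 * (π:ℂ) * Complex.I * m * t / L) = ω ^ t := by
    intro t _
    rw [hω, ← Complex.exp_int_mul]
    congr 1
    field_simp
  rw [Finset.sum_congr rfl this]
  exact zpow_sum_Ioc ω hω0 hω1 L hωn a

end CharSum
section CharSum2

lemma sum_eL_eq_zero (k : ℕ) (hk : 0 < k) (x : ℤ×ℤ) (hx : x ∈ (Tset (2*k : ℕ)).erase 0) :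
    ∑ y ∈ Tset (2*k : ℕ), eL (2*k) x y = 0 := by
  rw [Finset.mem_erase, Tset_two_mul, Finset.mem_product, Finset.mem_Ioc, Finset.mem_Ioc] at hx
  obtain ⟨hx0, ⟨hx11, hx12⟩, hx21, hx22⟩ := hx
  have hL : 0 < 2*k := by omega
  have hL0 : ((2*k : ℕ):ℂ) ≠ 0 := by
    exact_mod_cast Nat.cast_ne_zero.mpr hL.ne'
  have hIoc : Finset.Ioc (-(k:ℤ)) (k:ℤ) = Finset.Ioc (-(k:ℤ)) (-(k:ℤ) + (2*k : ℕ)) := by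
    congr 1; push_cast; ring
  have hsplit : ∀ a b : ℤ, eL (2*k) x (a, b) =
      Complex.exp (2*(π:ℂ)*Complex.I*(x.1 : ℂ)*a/((2*k:ℕ):ℂ)) *
      Complex.exp (2*(π:ℂ)*Complex.I*(x.2 : ℂ)*b/((2*k:ℕ):ℂ)) := by
    intro a b
    rw [eL, ← Complex.exp_add]
    congr 1
    field_simp
    push_cast
    ring
  rw [Tset_two_mul, Finset.sum_product]
  simp only [hsplit]
  have := Finset.sum_mul_sum (Finset.Ioc (-(k:ℤ)) (k:ℤ)) (Finset.Ioc (-(k:ℤ)) (k:ℤ))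
      (fun a => Complex.exp (2*(π:ℂ)*Complex.I*(x.1 : ℂ)*a/((2*k:ℕ):ℂ)))
      (fun b => Complex.exp (2*(π:ℂ)*Complex.I*(x.2 : ℂ)*b/((2*k:ℕ):ℂ)))
  rw [← this]
  have hcoord : x.1 ≠ 0 ∨ x.2 ≠ 0 := by
    by_contra hc
    push_neg at hc
    exact hx0 (Prod.ext hc.1 hc.2)
  rcases hcoord with h | h
  · have : ∑ a ∈ Finset.Ioc (-(k:ℤ)) (k:ℤ),
        Complex.exp (2*(π:ℂ)*Complex.I*(x.1 : ℂ)*a/((2*k:ℕ):ℂ)) = 0 := by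
      rw [hIoc]
      exact exp_unit_sum (2*k) hL x.1 (by push_cast; omega) (by push_cast; omega) h _
    rw [this, zero_mul]
  · have : ∑ b ∈ Finset.Ioc (-(k:ℤ)) (k:ℤ),
        Complex.exp (2*(π:ℂ)*Complex.I*(x.2 : ℂ)*b/((2*k:ℕ):ℂ)) = 0 := by
      rw [hIoc]
      exact exp_unit_sum (2*k) hL x.2 (by push_cast; omega) (by push_cast; omega) h _
    rw [this, mul_zero]

end CharSum2
section Harmonic

lemma sum_Icc_int_inv_le (k : ℕ) :
    ∑ j ∈ Finset.Icc (1:ℤ) (k:ℤ), ((j:ℝ))⁻¹ ≤ 1 + Real.log k := by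
  induction k with
  | zero => simp
  | succ n ih =>
    rcases Nat.eq_zero_or_pos n with hn | hn
    · subst hn; norm_num
    · have hins : Finset.Icc (1:ℤ) ((n+1 : ℕ):ℤ) = insert ((n+1 : ℕ):ℤ) (Finset.Icc (1:ℤ) (n:ℤ)) := by
        ext t
        simp only [Finset.mem_Icc, Finset.mem_insert]
        push_cast
        omega
      rw [hins, Finset.sum_insert (by simp)]
      have hstep : (((n+1:ℕ):ℤ):ℝ)⁻¹ ≤ Real.log (n+1) - Real.log n := by
        have hn0 : (0:ℝ) < n := by exact_mod_cast hn
        have hx : (0:ℝ) < (n:ℝ)/(n+1) := by positivity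
        have hlog := Real.log_le_sub_one_of_pos hx
        rw [Real.log_div (by positivity) (by positivity)] at hlog
        have h1 : (n:ℝ)/(n+1) - 1 = -((n:ℝ)+1)⁻¹ := by field_simp; ring
        push_cast
        linarith
      push_cast at ih hstep ⊢
      linarith

lemma sum_inv_sqNorm_le (k : ℕ) (hk : 0 < k) :
    ∑ y ∈ (Tset (2*k : ℕ)).erase 0, (sqNorm y)⁻¹ ≤ 12 * (1 + Real.log (2*k : ℕ)) := by
  classical
  set S := (Tset (2*k : ℕ)).erase 0 with hS
  have hmaps : ∀ y ∈ S, max |y.1| |y.2| ∈ Finset.Icc (1:ℤ) (k:ℤ) := by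
    intro y hy
    rw [hS, Finset.mem_erase, Tset_two_mul, Finset.mem_product, Finset.mem_Ioc, Finset.mem_Ioc] at hy
    obtain ⟨hy0, ⟨h11, h12⟩, h21, h22⟩ := hy
    have ha1 : |y.1| ≤ (k:ℤ) := abs_le.mpr ⟨by omega, h12⟩
    have ha2 : |y.2| ≤ (k:ℤ) := abs_le.mpr ⟨by omega, h22⟩
    simp only [Finset.mem_Icc]
    refine ⟨?_, max_le ha1 ha2⟩
    by_contra hc
    push_neg at hc
    have hm1 : |y.1| < 1 := lt_of_le_of_lt (le_max_left _ _) hc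
    have hm2 : |y.2| < 1 := lt_of_le_of_lt (le_max_right _ _) hc
    have h1 : y.1 = 0 := by
      have := abs_nonneg y.1
      exact abs_eq_zero.mp (by omega)
    have h2 : y.2 = 0 := by
      have := abs_nonneg y.2
      exact abs_eq_zero.mp (by omega)
    exact hy0 (Prod.ext h1 h2)
  rw [← Finset.sum_fiberwise_of_maps_to hmaps]
  have hbound : ∀ j ∈ Finset.Icc (1:ℤ) (k:ℤ),
      ∑ y ∈ S.filter (fun y => max |y.1| |y.2| = j), (sqNorm y)⁻¹ ≤ 12 * (j:ℝ)⁻¹ := by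
    intro j hj
    rw [Finset.mem_Icc] at hj
    obtain ⟨hj1, hjk⟩ := hj
    have hj0 : (0:ℤ) ≤ j := by omega
    have hjpos : (0:ℝ) < (j:ℝ) := by exact_mod_cast hj1
    have hcard : ((S.filter (fun y => max |y.1| |y.2| = j)).card : ℝ) ≤ 4 * (2*(j:ℝ)+1) := by
      have hsub : S.filter (fun y => max |y.1| |y.2| = j) ⊆
          (Finset.Icc (-j) j ×ˢ ({-j, j} : Finset ℤ)) ∪ (({-j, j} : Finset ℤ) ×ˢ Finset.Icc (-j) j) := by
        intro y hy
        rw [Finset.mem_filter] at hy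
        obtain ⟨-, hmax⟩ := hy
        have h1 : |y.1| ≤ j := hmax ▸ le_max_left |y.1| |y.2|
        have h2 : |y.2| ≤ j := hmax ▸ le_max_right |y.1| |y.2|
        have hb1 := abs_le.mp h1
        have hb2 := abs_le.mp h2
        have hchoice : |y.1| = j ∨ |y.2| = j := by
          rcases max_choice |y.1| |y.2| with h | h
          · exact Or.inl (h.symm.trans hmax)
          · exact Or.inr (h.symm.trans hmax)
        rw [Finset.mem_union, Finset.mem_product, Finset.mem_product]
        rcases hchoice with h | h
        · right
          rcases (abs_eq hj0).mp h with h' | h'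
          · exact ⟨by simp [h'], by rw [Finset.mem_Icc]; exact hb2⟩
          · exact ⟨by simp [h'], by rw [Finset.mem_Icc]; exact hb2⟩
        · left
          rcases (abs_eq hj0).mp h with h' | h'
          · exact ⟨by rw [Finset.mem_Icc]; exact hb1, by simp [h']⟩
          · exact ⟨by rw [Finset.mem_Icc]; exact hb1, by simp [h']⟩
      have hcn : (S.filter (fun y => max |y.1| |y.2| = j)).card ≤ 2 * ((2*j+1).toNat * 2) := by
        calc (S.filter (fun y => max |y.1| |y.2| = j)).card
            ≤ _ := Finset.card_le_card hsub
          _ ≤ (Finset.Icc (-j) j ×ˢ ({-j, j} : Finset ℤ)).card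
              + (({-j, j} : Finset ℤ) ×ˢ Finset.Icc (-j) j).card := Finset.card_union_le _ _
          _ ≤ 2 * ((2*j+1).toNat * 2) := by
              rw [Finset.card_product, Finset.card_product, Int.card_Icc]
              have hc2 : ({-j, j} : Finset ℤ).card ≤ 2 :=
                (Finset.card_insert_le _ _).trans (by simp)
              have he : (j + 1 - -j).toNat = (2*j+1).toNat := by omega
              rw [he]
              have hA := Nat.mul_le_mul_left ((2*j+1).toNat) hc2
              have hB := Nat.mul_le_mul_right ((2*j+1).toNat) hc2
              omega
      calc ((S.filter (fun y => max |y.1| |y.2| = j)).card : ℝ)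
          ≤ (2 * ((2*j+1).toNat * 2) : ℕ) := by exact_mod_cast hcn
        _ = 4 * (2*(j:ℝ)+1) := by
            have : ((2*j+1).toNat : ℤ) = 2*j+1 := by omega
            have h2 : ((2*j+1).toNat : ℝ) = 2*(j:ℝ)+1 := by exact_mod_cast this
            push_cast
            rw [h2]
            ring
    have hterm : ∀ y ∈ S.filter (fun y => max |y.1| |y.2| = j), (sqNorm y)⁻¹ ≤ ((j:ℝ)^2)⁻¹ := by
      intro y hy
      rw [Finset.mem_filter] at hy
      obtain ⟨-, hmax⟩ := hy
      have hchoice : |y.1| = j ∨ |y.2| = j := by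
        rcases max_choice |y.1| |y.2| with h | h
        · exact Or.inl (h.symm.trans hmax)
        · exact Or.inr (h.symm.trans hmax)
      have hsq : (j:ℝ)^2 ≤ sqNorm y := by
        rw [sqNorm]
        rcases hchoice with h | h
        · have he : ((j:ℝ))^2 = ((y.1:ℝ))^2 := by
            rw [← h]; push_cast; rw [sq_abs]
          nlinarith [sq_nonneg ((y.2:ℝ))]
        · have he : ((j:ℝ))^2 = ((y.2:ℝ))^2 := by
            rw [← h]; push_cast; rw [sq_abs]
          nlinarith [sq_nonneg ((y.1:ℝ))]
      exact inv_anti₀ (by positivity) hsq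
    calc ∑ y ∈ S.filter (fun y => max |y.1| |y.2| = j), (sqNorm y)⁻¹
        ≤ ∑ y ∈ S.filter (fun y => max |y.1| |y.2| = j), ((j:ℝ)^2)⁻¹ :=
          Finset.sum_le_sum hterm
      _ = (S.filter (fun y => max |y.1| |y.2| = j)).card * ((j:ℝ)^2)⁻¹ := by
          rw [Finset.sum_const, nsmul_eq_mul]
      _ ≤ (4 * (2*(j:ℝ)+1)) * ((j:ℝ)^2)⁻¹ :=
          mul_le_mul_of_nonneg_right hcard (by positivity)
      _ ≤ 12 * (j:ℝ)⁻¹ := by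
          have hj1' : (1:ℝ) ≤ (j:ℝ) := by exact_mod_cast hj1
          rw [← sub_nonneg]
          have he : 12 * (j:ℝ)⁻¹ - 4 * (2*(j:ℝ)+1) * ((j:ℝ)^2)⁻¹
              = (4*(j:ℝ) - 4) / (j:ℝ)^2 := by
            field_simp
            ring
          rw [he]
          apply div_nonneg (by linarith) (by positivity)
  calc ∑ j ∈ Finset.Icc (1:ℤ) (k:ℤ), ∑ y ∈ S.filter (fun y => max |y.1| |y.2| = j), (sqNorm y)⁻¹
      ≤ ∑ j ∈ Finset.Icc (1:ℤ) (k:ℤ), 12 * (j:ℝ)⁻¹ := Finset.sum_le_sum hbound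
    _ = 12 * ∑ j ∈ Finset.Icc (1:ℤ) (k:ℤ), ((j:ℝ))⁻¹ := by rw [Finset.mul_sum]
    _ ≤ 12 * (1 + Real.log k) := by
        have := sum_Icc_int_inv_le k
        linarith
    _ ≤ 12 * (1 + Real.log (2*k : ℕ)) := by
        have hlog : Real.log k ≤ Real.log (2*k : ℕ) := by
          apply Real.log_le_log (by exact_mod_cast hk)
          push_cast
          nlinarith [(by exact_mod_cast hk : (1:ℝ) ≤ (k:ℝ))]
        linarith

end Harmonic
section GFormula

lemma Gfun_formula (M : ℕ → ℕ) (q : ℕ → ℤ × ℤ → ℝ) (k : ℕ) (hk : 0 < k)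
    (hP0 : CondP0 (M (2*k)) (q (2*k))) (lam : ℝ) (hlam : 0 < lam)
    (hphi : ∀ θ : ℝ×ℝ, |phiOf (M (2*k)) (q (2*k)) θ| ≤ 1)
    (x : ℤ×ℤ) (hx : x ∈ Tset (2*k : ℕ)) :
    Gfun M q (2*k) x (lam/((2*k : ℕ):ℝ)^2)
      = (((1 + lam/((2*k : ℕ):ℝ)^2 : ℝ)):ℂ)⁻¹ *
        ((if x = 0 then 1 else 0) + (1:ℂ)/(lam:ℂ)
          + (((2*k : ℕ):ℂ)^2)⁻¹ * ∑ y ∈ (Tset (2*k : ℕ)).erase 0,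
              eL (2*k) x y * ((phiOf (M (2*k)) (q (2*k)) (fourierTheta (2*k) y) : ℂ) /
                ((1 + lam/((2*k : ℕ):ℝ)^2 - phiOf (M (2*k)) (q (2*k)) (fourierTheta (2*k) y) : ℝ) : ℂ))) := by
  set L : ℕ := 2*k with hLdef
  set lam' : ℝ := lam/((L : ℕ):ℝ)^2 with hl'
  have hLpos : 0 < L := by omega
  have hLR : (0:ℝ) < (L:ℝ) := by exact_mod_cast hLpos
  have hLC : ((L:ℕ):ℂ) ≠ 0 := by exact_mod_cast hLpos.ne'
  have hl'pos : 0 < lam' := by rw [hl']; positivity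
  set φ : ℝ×ℝ → ℝ := phiOf (M L) (q L) with hφ
  set c : ℂ := ((1 + lam' : ℝ) : ℂ) with hcdef
  have hD : ∀ y : ℤ×ℤ, (0:ℝ) < 1 + lam' - φ (fourierTheta L y) := by
    intro y
    have h1 := hphi (fourierTheta L y)
    have := abs_le.mp h1
    linarith [this.2]
  have hc0 : (0:ℝ) < 1 + lam' := by linarith
  have hc : c ≠ 0 := by
    rw [hcdef]; exact_mod_cast Complex.ofReal_ne_zero.mpr hc0.ne'
  have hpt : ∀ y : ℤ×ℤ,
      eL L x y / ((1 + lam' - φ (fourierTheta L y) : ℝ) : ℂ)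
      = c⁻¹ * (eL L x y + eL L x y * ((φ (fourierTheta L y) : ℂ) /
          ((1 + lam' - φ (fourierTheta L y) : ℝ) : ℂ))) := by
    intro y
    set d : ℂ := ((1 + lam' - φ (fourierTheta L y) : ℝ) : ℂ) with hddef
    set p : ℂ := ((φ (fourierTheta L y) : ℝ) : ℂ) with hpdef
    have hd : d ≠ 0 := by
      rw [hddef]; exact_mod_cast Complex.ofReal_ne_zero.mpr (hD y).ne'
    have hkey : c = d + p := by rw [hcdef, hddef, hpdef]; push_cast; ring
    have h1 : c / d = 1 + p / d := by rw [hkey, add_div, div_self hd]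
    have h2 : c⁻¹ * (c / d) = 1 / d := by
      rw [div_eq_mul_inv, ← mul_assoc, inv_mul_cancel₀ hc, one_mul, one_div]
    symm
    calc c⁻¹ * (eL L x y + eL L x y * (p / d)) = eL L x y * (c⁻¹ * (1 + p / d)) := by ring
      _ = eL L x y * (c⁻¹ * (c / d)) := by rw [h1]
      _ = eL L x y * (1 / d) := by rw [h2]
      _ = eL L x y / d := by ring
  rw [Gfun]
  rw [Finset.sum_congr rfl (fun y _ => hpt y), ← Finset.mul_sum, Finset.sum_add_distrib]
  have h0mem : (0 : ℤ×ℤ) ∈ Tset (L:ℕ) := by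
    rw [hLdef]; exact zero_mem_Tset k hk
  have hsum2 : ∑ y ∈ Tset (L:ℕ), eL L x y * ((φ (fourierTheta L y) : ℂ) /
      ((1 + lam' - φ (fourierTheta L y) : ℝ) : ℂ))
      = (((lam' : ℝ)):ℂ)⁻¹ + ∑ y ∈ (Tset (L:ℕ)).erase 0, eL L x y * ((φ (fourierTheta L y) : ℂ) /
      ((1 + lam' - φ (fourierTheta L y) : ℝ) : ℂ)) := by
    rw [← Finset.add_sum_erase _ _ h0mem]
    congr 1
    have hθ0 : fourierTheta L (0 : ℤ×ℤ) = ((0:ℝ), (0:ℝ)) := by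
      simp [fourierTheta]
    rw [eL_zero_right, hθ0, hφ, phiOf_zero _ _ hP0]
    norm_num
  rw [hsum2]
  have hsum1 : ∑ y ∈ Tset (L:ℕ), eL L x y = if x = 0 then ((L:ℂ)^2) else 0 := by
    by_cases hx0 : x = 0
    · subst hx0
      simp only [if_true, eL_zero_left]
      rw [Finset.sum_const, hLdef, card_Tset_two_mul]
      push_cast
      ring
    · rw [if_neg hx0]
      rw [hLdef]
      exact sum_eL_eq_zero k hk x (Finset.mem_erase.mpr ⟨hx0, by rw [← hLdef]; exact hx⟩)
  rw [hsum1]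
  have hL2 : ((L:ℂ)^2)⁻¹ * ((L:ℂ)^2) = 1 := inv_mul_cancel₀ (pow_ne_zero 2 hLC)
  have hlamterm : ((L:ℂ)^2)⁻¹ * (((lam' : ℝ)):ℂ)⁻¹ = 1/(lam:ℂ) := by
    rw [hl']
    have hcast : ((lam / ((L:ℕ):ℝ)^2 : ℝ) : ℂ) = (lam : ℂ) / ((L:ℕ):ℂ)^2 := by push_cast; ring
    rw [hcast]
    have hlC : (lam:ℂ) ≠ 0 := by exact_mod_cast Complex.ofReal_ne_zero.mpr hlam.ne'
    field_simp
  by_cases hx0 : x = 0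
  · rw [if_pos hx0, if_pos hx0]
    linear_combination c⁻¹ * hL2 + c⁻¹ * hlamterm
  · rw [if_neg hx0, if_neg hx0]
    linear_combination c⁻¹ * hlamterm

end GFormula
section SmallHelp

lemma supNorm_ft (L : ℕ) (hL : 0 < L) (y : ℤ×ℤ) :
    supNorm (fourierTheta L y) = 2*π/(L:ℝ) * max |(y.1:ℝ)| |(y.2:ℝ)| := by
  have hLR : (0:ℝ) < (L:ℝ) := by exact_mod_cast hL
  have hc : (0:ℝ) ≤ 2*π/(L:ℝ) := by positivity
  have h : ∀ t:ℝ, |2*π*t/(L:ℝ)| = 2*π/(L:ℝ) * |t| := by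
    intro t
    rw [abs_div, abs_mul, abs_mul, abs_of_nonneg Real.pi_pos.le,
      abs_of_nonneg hLR.le]
    norm_num
    ring
  rw [supNorm, fourierTheta]
  simp only
  rw [h, h]
  rcases le_total |(y.1:ℝ)| |(y.2:ℝ)| with hle | hle
  · rw [max_eq_right hle, max_eq_right (mul_le_mul_of_nonneg_left hle hc)]
  · rw [max_eq_left hle, max_eq_left (mul_le_mul_of_nonneg_left hle hc)]

lemma sqNormR_pos (θ : ℝ×ℝ) (hθ : θ ≠ 0) : 0 < sqNormR θ := by
  rw [sqNormR]
  have : θ.1 ≠ 0 ∨ θ.2 ≠ 0 := by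
    by_contra hc
    push_neg at hc
    exact hθ (Prod.ext hc.1 hc.2)
  rcases this with h | h
  · nlinarith [sq_nonneg θ.2, pow_pos (abs_pos.mpr h) 2, sq_abs θ.1]
  · nlinarith [sq_nonneg θ.1, pow_pos (abs_pos.mpr h) 2, sq_abs θ.2]

lemma sqNormR_ft (L : ℕ) (hL : 0 < L) (y : ℤ×ℤ) :
    sqNormR (fourierTheta L y) = 4*π^2 * sqNorm y / (L:ℝ)^2 := by
  have hLR : (0:ℝ) < (L:ℝ) := by exact_mod_cast hL
  rw [sqNormR, fourierTheta, sqNorm]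
  simp only
  field_simp
  ring

lemma ft_ne_zero (L : ℕ) (hL : 0 < L) (y : ℤ×ℤ) (hy : y ≠ 0) :
    fourierTheta L y ≠ 0 := by
  intro hc
  apply hy
  have hLR : (0:ℝ) < (L:ℝ) := by exact_mod_cast hL
  have h1 : 2*π*(y.1:ℝ)/(L:ℝ) = 0 := congrArg Prod.fst hc
  have h2 : 2*π*(y.2:ℝ)/(L:ℝ) = 0 := congrArg Prod.snd hc
  have hy1 : (y.1:ℝ) = 0 := by
    field_simp [Real.pi_ne_zero] at h1
    simpa [Real.pi_ne_zero] using h1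
  have hy2 : (y.2:ℝ) = 0 := by
    field_simp [Real.pi_ne_zero] at h2
    simpa [Real.pi_ne_zero] using h2
  exact Prod.ext (by exact_mod_cast hy1) (by exact_mod_cast hy2)

lemma evenAtTop_even : ∀ᶠ L in evenAtTop, Even L := by
  rw [evenAtTop, Filter.eventually_inf_principal]
  exact Filter.Eventually.of_forall fun n hn => hn

lemma evenAtTop_of_atTop {p : ℕ → Prop} (h : ∀ᶠ L in Filter.atTop, p L) :
    ∀ᶠ L in evenAtTop, p L :=
  h.filter_mono inf_le_left

end SmallHelp
section Core

set_option maxHeartbeats 1000000 in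
lemma core_bound (M : ℕ → ℕ) (q : ℕ → ℤ × ℤ → ℝ) (σ2 : ℝ) (hσ : 0 < σ2)
    (hMpos : ∀ L : ℕ, 0 < M L)
    (hP0 : ∀ L : ℕ, Even L → 0 < L → CondP0 (M L) (q L))
    (hP1 : CondP1 M q σ2) (hP2 : CondP2 M q) (hP3 : CondP3 M q)
    (hM2 : Tendsto (fun L : ℕ => (M L : ℝ) ^ 2 / Real.log L) evenAtTop atTop)
    (lam : ℝ) (hlam : 0 < lam) (η : ℝ) (hη : 0 < η) :
    ∀ᶠ L in evenAtTop, ∀ k : ℕ, L = 2*k → 0 < k →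
      ((L:ℝ)^2)⁻¹ * ∑ y ∈ (Tset L).erase 0,
        |phiOf (M L) (q L) (fourierTheta L y)| /
          (1 + lam/(L:ℝ)^2 - phiOf (M L) (q L) (fourierTheta L y)) ≤ η := by
  classical
  obtain ⟨δ, hδ, hP1'⟩ := hP1 (1/2) (by norm_num)
  obtain ⟨δ', hδ', ζ, hζ, hP2'⟩ := hP2 δ hδ
  set ε₁ : ℝ := min (η/6) (1/2) with hε₁def
  have hε₁ : 0 < ε₁ := lt_min (by positivity) (by norm_num)
  set a : ℝ := min δ' (π * Real.sqrt (η*ζ/12)) with hadef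
  have ha : 0 < a := by
    apply lt_min hδ'
    have : (0:ℝ) < Real.sqrt (η*ζ/12) := Real.sqrt_pos.mpr (by positivity)
    positivity
  have hP3' := hP3 ε₁ hε₁ a ha
  have hM2' : ∀ᶠ L in evenAtTop, 72/(σ2*π^2*η) ≤ (M L:ℝ)^2 / Real.log L :=
    hM2.eventually_ge_atTop _
  have hbig : ∀ᶠ L in evenAtTop, (3:ℕ) ≤ L ∧ π/a ≤ (L:ℝ) := by
    apply evenAtTop_of_atTop
    filter_upwards [Filter.eventually_ge_atTop 3, Filter.eventually_ge_atTop ⌈π/a⌉₊]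
      with L h1 h2
    exact ⟨h1, le_trans (Nat.le_ceil _) (by exact_mod_cast h2)⟩
  filter_upwards [hP1', hP2', hP3', hM2', hbig, evenAtTop_even]
    with L h1 h2 h3 hm2 hbigL hevenL
  intro k hLk hkpos
  obtain ⟨hL3, hLa⟩ := hbigL
  have hLpos : 0 < L := by omega
  have hLR : (0:ℝ) < (L:ℝ) := by exact_mod_cast hLpos
  have hm : 0 < M L := hMpos L
  have hmR : (0:ℝ) < ((M L : ℕ):ℝ) := by exact_mod_cast hm
  have hP0L := hP0 L hevenL hLpos
  have hphi : ∀ θ : ℝ×ℝ, |phiOf (M L) (q L) θ| ≤ 1 := abs_phiOf_le_one _ _ hP0L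
  set φ : ℝ×ℝ → ℝ := phiOf (M L) (q L) with hφdef
  set lam' : ℝ := lam/(L:ℝ)^2 with hl'def
  have hl' : 0 < lam' := by rw [hl'def]; positivity
  have hD : ∀ y : ℤ×ℤ, 0 < 1 + lam' - φ (fourierTheta L y) := by
    intro y
    have := abs_le.mp (hphi (fourierTheta L y))
    linarith [this.2]
  set F : ℤ×ℤ → ℝ := fun y => |φ (fourierTheta L y)| / (1 + lam' - φ (fourierTheta L y)) with hFdef
  have hF0 : ∀ y, 0 ≤ F y := fun y => div_nonneg (abs_nonneg _) (hD y).le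
  set S : Finset (ℤ×ℤ) := (Tset L).erase 0 with hSdef
  show ((L:ℝ)^2)⁻¹ * ∑ y ∈ S, F y ≤ η
  -- basic facts about y ∈ S
  have hymax : ∀ y ∈ S, (1:ℝ) ≤ max |(y.1:ℝ)| |(y.2:ℝ)| ∧ max |(y.1:ℝ)| |(y.2:ℝ)| ≤ (k:ℝ) := by
    intro y hy
    rw [hSdef, hLk, Finset.mem_erase, Tset_two_mul, Finset.mem_product,
      Finset.mem_Ioc, Finset.mem_Ioc] at hy
    obtain ⟨hy0, ⟨h11, h12⟩, h21, h22⟩ := hy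
    have hy1 : |y.1| ≤ (k:ℤ) := abs_le.mpr ⟨by omega, h12⟩
    have hy2 : |y.2| ≤ (k:ℤ) := abs_le.mpr ⟨by omega, h22⟩
    have e1 : ((|y.1| : ℤ):ℝ) = |(y.1:ℝ)| := by push_cast; rfl
    have e2 : ((|y.2| : ℤ):ℝ) = |(y.2:ℝ)| := by push_cast; rfl
    have hne : 1 ≤ |y.1| ∨ 1 ≤ |y.2| := by
      by_contra hc
      push_neg at hc
      have z1 : y.1 = 0 := by
        have := abs_nonneg y.1; exact abs_eq_zero.mp (by omega)
      have z2 : y.2 = 0 := by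
        have := abs_nonneg y.2; exact abs_eq_zero.mp (by omega)
      exact hy0 (Prod.ext z1 z2)
    constructor
    · rcases hne with h | h
      · apply le_max_of_le_left
        rw [← e1]; exact_mod_cast h
      · apply le_max_of_le_right
        rw [← e2]; exact_mod_cast h
    · apply max_le
      · rw [← e1]; exact_mod_cast hy1
      · rw [← e2]; exact_mod_cast hy2
  have hSne : ∀ y ∈ S, y ≠ 0 := by
    intro y hy
    rw [hSdef, Finset.mem_erase] at hy
    exact hy.1
  have hsupπ : ∀ y ∈ S, supNorm (fourierTheta L y) ≤ π := by
    intro y hy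
    rw [supNorm_ft L hLpos]
    have h := (hymax y hy).2
    have hπ : (0:ℝ) < π := Real.pi_pos
    calc 2*π/(L:ℝ) * max |(y.1:ℝ)| |(y.2:ℝ)| ≤ 2*π/(L:ℝ) * (k:ℝ) :=
          mul_le_mul_of_nonneg_left h (by positivity)
      _ = π := by
          rw [hLk]
          have hc : ((2*k : ℕ):ℝ) = 2*(k:ℝ) := by push_cast; ring
          rw [hc]
          have hkR : (0:ℝ) < (k:ℝ) := by exact_mod_cast hkpos
          field_simp
  set P₁ : ℤ×ℤ → Prop := fun y => supNorm (fourierTheta L y) ≤ δ/(M L) with hP₁def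
  set P₂ : ℤ×ℤ → Prop := fun y => supNorm (fourierTheta L y) ≤ a with hP₂def
  set T : Finset (ℤ×ℤ) := S.filter (fun y => ¬ P₁ y) with hTdef
  have hsplit : ∑ y ∈ S, F y
      = ∑ y ∈ S.filter P₁, F y
        + (∑ y ∈ T.filter P₂, F y + ∑ y ∈ T.filter (fun y => ¬ P₂ y), F y) := by
    rw [Finset.sum_filter_add_sum_filter_not T P₂ F, hTdef,
      Finset.sum_filter_add_sum_filter_not S P₁ F]
  -- Bound 1
  have hb1 : ((L:ℝ)^2)⁻¹ * ∑ y ∈ S.filter P₁, F y ≤ η/3 := by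
    have hterm : ∀ y ∈ S.filter P₁, F y ≤ (L:ℝ)^2/(σ2*π^2*((M L:ℕ):ℝ)^2) * (sqNorm y)⁻¹ := by
      intro y hy
      rw [Finset.mem_filter] at hy
      obtain ⟨hyS, hyP⟩ := hy
      have hyne := hSne y hyS
      have hθne : fourierTheta L y ≠ 0 := ft_ne_zero L hLpos y hyne
      have hQpos : 0 < σ2 * ((M L:ℕ):ℝ)^2 * sqNormR (fourierTheta L y) / 2 := by
        have := sqNormR_pos _ hθne
        positivity
      have hio := h1 (fourierTheta L y) hθne hyP
      rw [Set.mem_Ioo] at hio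
      have hlow : σ2 * ((M L:ℕ):ℝ)^2 * sqNormR (fourierTheta L y) / 2 * (1/2)
          < 1 - φ (fourierTheta L y) := by
        have hx := hio.1
        norm_num at hx
        rw [lt_div_iff₀ hQpos] at hx
        linarith
      have hsqft : sqNormR (fourierTheta L y) = 4*π^2 * sqNorm y / (L:ℝ)^2 :=
        sqNormR_ft L hLpos y
      have hsqpos : 0 < sqNorm y := by
        have h := (hymax y hyS).1
        rw [sqNorm]
        rcases le_or_gt |(y.1:ℝ)| |(y.2:ℝ)| with hc | hc
        · have h2' : (1:ℝ) ≤ |(y.2:ℝ)| := by rw [max_eq_right hc] at h; exact h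
          nlinarith [sq_nonneg ((y.1:ℝ)), sq_abs ((y.2:ℝ))]
        · have h2' : (1:ℝ) ≤ |(y.1:ℝ)| := by rw [max_eq_left hc.le] at h; exact h
          nlinarith [sq_nonneg ((y.2:ℝ)), sq_abs ((y.1:ℝ))]
      have hDlow : σ2*π^2*((M L:ℕ):ℝ)^2 * sqNorm y / (L:ℝ)^2 ≤ 1 + lam' - φ (fourierTheta L y) := by
        have he : σ2 * ((M L:ℕ):ℝ)^2 * sqNormR (fourierTheta L y) / 2 * (1/2)
            = σ2*π^2*((M L:ℕ):ℝ)^2 * sqNorm y / (L:ℝ)^2 := by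
          rw [hsqft]
          ring
        rw [he] at hlow
        linarith
      have hBpos : 0 < σ2*π^2*((M L:ℕ):ℝ)^2 * sqNorm y / (L:ℝ)^2 := by positivity
      calc F y ≤ 1 / (1 + lam' - φ (fourierTheta L y)) := by
            rw [hFdef]
            exact div_le_div₀ (by norm_num) (hphi _) (hD y) (le_refl _)
        _ ≤ 1 / (σ2*π^2*((M L:ℕ):ℝ)^2 * sqNorm y / (L:ℝ)^2) :=
            one_div_le_one_div_of_le hBpos hDlow
        _ = (L:ℝ)^2/(σ2*π^2*((M L:ℕ):ℝ)^2) * (sqNorm y)⁻¹ := by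
            field_simp
    have hsum : ∑ y ∈ S.filter P₁, F y
        ≤ (L:ℝ)^2/(σ2*π^2*((M L:ℕ):ℝ)^2) * (12 * (1 + Real.log L)) := by
      calc ∑ y ∈ S.filter P₁, F y
          ≤ ∑ y ∈ S.filter P₁, (L:ℝ)^2/(σ2*π^2*((M L:ℕ):ℝ)^2) * (sqNorm y)⁻¹ :=
            Finset.sum_le_sum hterm
        _ ≤ ∑ y ∈ S, (L:ℝ)^2/(σ2*π^2*((M L:ℕ):ℝ)^2) * (sqNorm y)⁻¹ := by
            apply Finset.sum_le_sum_of_subset_of_nonneg (Finset.filter_subset _ _)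
            intro y hyS _
            have hsq : 0 ≤ sqNorm y := by rw [sqNorm]; positivity
            positivity
        _ = (L:ℝ)^2/(σ2*π^2*((M L:ℕ):ℝ)^2) * ∑ y ∈ S, (sqNorm y)⁻¹ := by
            rw [Finset.mul_sum]
        _ ≤ (L:ℝ)^2/(σ2*π^2*((M L:ℕ):ℝ)^2) * (12 * (1 + Real.log L)) := by
            apply mul_le_mul_of_nonneg_left _ (by positivity)
            rw [hSdef, hLk]
            exact sum_inv_sqNorm_le k hkpos
    have hlog1 : 1 ≤ Real.log L := by
      have h3 : (3:ℝ) ≤ (L:ℝ) := by exact_mod_cast hL3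
      have hexp : Real.exp 1 ≤ (L:ℝ) := by
        have := Real.exp_one_lt_d9
        linarith
      calc (1:ℝ) = Real.log (Real.exp 1) := (Real.log_exp 1).symm
        _ ≤ Real.log L := Real.log_le_log (Real.exp_pos 1) hexp
    have hlogpos : 0 < Real.log L := by linarith
    have hMbig : 72 * Real.log L ≤ ((M L:ℕ):ℝ)^2 * (σ2*π^2*η) := by
      rw [le_div_iff₀ hlogpos] at hm2
      calc 72 * Real.log L = 72/(σ2*π^2*η) * Real.log L * (σ2*π^2*η) := by
            field_simp
            try ring
        _ ≤ ((M L:ℕ):ℝ)^2 * (σ2*π^2*η) :=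
            mul_le_mul_of_nonneg_right hm2 (by positivity)
    calc ((L:ℝ)^2)⁻¹ * ∑ y ∈ S.filter P₁, F y
        ≤ ((L:ℝ)^2)⁻¹ * ((L:ℝ)^2/(σ2*π^2*((M L:ℕ):ℝ)^2) * (12 * (1 + Real.log L))) :=
          mul_le_mul_of_nonneg_left hsum (by positivity)
      _ = 12 * (1 + Real.log L) / (σ2*π^2*((M L:ℕ):ℝ)^2) := by
          field_simp
          try ring
      _ ≤ 24 * Real.log L / (σ2*π^2*((M L:ℕ):ℝ)^2) := by
          apply div_le_div_of_nonneg_right _ (by positivity)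
          linarith
      _ ≤ η/3 := by
          rw [div_le_div_iff₀ (by positivity) (by norm_num)]
          nlinarith [hMbig]
  -- Bound 2
  have hb2 : ((L:ℝ)^2)⁻¹ * ∑ y ∈ T.filter P₂, F y ≤ η/3 := by
    set b : ℤ := ⌊a*(L:ℝ)/(2*π)⌋ with hbdef
    have hπ : (0:ℝ) < π := Real.pi_pos
    have hb0 : 0 ≤ b := Int.floor_nonneg.mpr (by positivity)
    have hsub : T.filter P₂ ⊆ Finset.Icc (-b) b ×ˢ Finset.Icc (-b) b := by
      intro y hy
      rw [Finset.mem_filter, hTdef, Finset.mem_filter] at hy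
      obtain ⟨⟨hyS, -⟩, hyP₂⟩ := hy
      rw [hP₂def] at hyP₂
      rw [supNorm_ft L hLpos] at hyP₂
      have hmax : max |(y.1:ℝ)| |(y.2:ℝ)| ≤ a*(L:ℝ)/(2*π) := by
        rw [div_mul_eq_mul_div, div_le_iff₀ (by positivity : (0:ℝ) < (L:ℝ))] at hyP₂
        rw [le_div_iff₀ (by positivity : (0:ℝ) < 2*π)]
        calc max |(y.1:ℝ)| |(y.2:ℝ)| * (2*π) = 2*π * max |(y.1:ℝ)| |(y.2:ℝ)| := by ring
          _ ≤ a * (L:ℝ) := hyP₂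
      have hy1 : |(y.1:ℝ)| ≤ a*(L:ℝ)/(2*π) := le_trans (le_max_left _ _) hmax
      have hy2 : |(y.2:ℝ)| ≤ a*(L:ℝ)/(2*π) := le_trans (le_max_right _ _) hmax
      have hby1 : |y.1| ≤ b := by
        rw [hbdef]
        apply Int.le_floor.mpr
        calc ((|y.1| : ℤ):ℝ) = |(y.1:ℝ)| := by push_cast; rfl
          _ ≤ a*(L:ℝ)/(2*π) := hy1
      have hby2 : |y.2| ≤ b := by
        rw [hbdef]
        apply Int.le_floor.mpr
        calc ((|y.2| : ℤ):ℝ) = |(y.2:ℝ)| := by push_cast; rfl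
          _ ≤ a*(L:ℝ)/(2*π) := hy2
      rw [Finset.mem_product, Finset.mem_Icc, Finset.mem_Icc]
      have b1 := abs_le.mp hby1
      have b2 := abs_le.mp hby2
      exact ⟨⟨b1.1, b1.2⟩, b2.1, b2.2⟩
    have hterm : ∀ y ∈ T.filter P₂, F y ≤ 1/ζ := by
      intro y hy
      rw [Finset.mem_filter, hTdef, Finset.mem_filter] at hy
      obtain ⟨⟨hyS, hyP₁⟩, hyP₂⟩ := hy
      rw [hP₂def] at hyP₂
      rw [hP₁def] at hyP₁
      have hδ'le : supNorm (fourierTheta L y) ≤ δ' :=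
        le_trans hyP₂ (by rw [hadef]; exact min_le_left _ _)
      have hgt := h2 (fourierTheta L y) hδ'le hyP₁
      have hDgt : ζ < 1 + lam' - φ (fourierTheta L y) := by linarith
      rw [hFdef]
      exact div_le_div₀ (by positivity) (hphi _) hζ hDgt.le
    have hcard : ((T.filter P₂).card : ℝ) ≤ 2*a*(L:ℝ)/π * (2*a*(L:ℝ)/π) := by
      have hc1 : (T.filter P₂).card ≤ (Finset.Icc (-b) b ×ˢ Finset.Icc (-b) b).card :=
        Finset.card_le_card hsub
      have hc2 : (Finset.Icc (-b) b ×ˢ Finset.Icc (-b) b).card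
          = (b+1 - -b).toNat * (b+1 - -b).toNat := by
        rw [Finset.card_product, Int.card_Icc]
      have hbR : ((b+1 - -b).toNat : ℝ) ≤ 2*a*(L:ℝ)/π := by
        have ht : ((b+1 - -b).toNat : ℤ) = 2*b+1 := by omega
        have htR : ((b+1 - -b).toNat : ℝ) = 2*(b:ℝ)+1 := by exact_mod_cast ht
        rw [htR]
        have hfl : (b:ℝ) ≤ a*(L:ℝ)/(2*π) := Int.floor_le _
        have haL : π ≤ a*(L:ℝ) := by
          rw [div_le_iff₀ ha] at hLa
          linarith [hLa]
        calc 2*(b:ℝ)+1 ≤ 2*(a*(L:ℝ)/(2*π)) + 1 := by linarith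
          _ = a*(L:ℝ)/π + 1 := by field_simp
          _ ≤ a*(L:ℝ)/π + a*(L:ℝ)/π := by
              have : (1:ℝ) ≤ a*(L:ℝ)/π := by
                rw [le_div_iff₀ hπ]; linarith
              linarith
          _ = 2*a*(L:ℝ)/π := by ring
      calc ((T.filter P₂).card : ℝ) ≤ (((b+1 - -b).toNat * (b+1 - -b).toNat : ℕ) : ℝ) := by
            exact_mod_cast hc2 ▸ hc1
        _ = ((b+1 - -b).toNat : ℝ) * ((b+1 - -b).toNat : ℝ) := by push_cast; ring
        _ ≤ 2*a*(L:ℝ)/π * (2*a*(L:ℝ)/π) := by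
            apply mul_le_mul hbR hbR (by positivity) (by positivity)
    have hsum : ∑ y ∈ T.filter P₂, F y ≤ ((T.filter P₂).card : ℝ) * (1/ζ) := by
      calc ∑ y ∈ T.filter P₂, F y ≤ ∑ y ∈ T.filter P₂, 1/ζ := Finset.sum_le_sum hterm
        _ = ((T.filter P₂).card : ℝ) * (1/ζ) := by rw [Finset.sum_const, nsmul_eq_mul]
    have ha2 : a^2 ≤ π^2 * (η*ζ/12) := by
      have hle : a ≤ π * Real.sqrt (η*ζ/12) := by rw [hadef]; exact min_le_right _ _
      have hs : (π * Real.sqrt (η*ζ/12))^2 = π^2 * (η*ζ/12) := by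
        rw [mul_pow, Real.sq_sqrt (by positivity : (0:ℝ) ≤ η*ζ/12)]
      calc a^2 ≤ (π * Real.sqrt (η*ζ/12))^2 := by
            apply pow_le_pow_left₀ ha.le hle
        _ = π^2 * (η*ζ/12) := hs
    calc ((L:ℝ)^2)⁻¹ * ∑ y ∈ T.filter P₂, F y
        ≤ ((L:ℝ)^2)⁻¹ * (2*a*(L:ℝ)/π * (2*a*(L:ℝ)/π) * (1/ζ)) := by
          apply mul_le_mul_of_nonneg_left _ (by positivity)
          calc ∑ y ∈ T.filter P₂, F y ≤ ((T.filter P₂).card : ℝ) * (1/ζ) := hsum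
            _ ≤ 2*a*(L:ℝ)/π * (2*a*(L:ℝ)/π) * (1/ζ) :=
                mul_le_mul_of_nonneg_right hcard (by positivity)
      _ = 4*a^2/(π^2*ζ) := by
          field_simp
          try ring
      _ ≤ η/3 := by
          rw [div_le_div_iff₀ (by positivity) (by norm_num)]
          nlinarith [ha2]
  -- Bound 3
  have hb3 : ((L:ℝ)^2)⁻¹ * ∑ y ∈ T.filter (fun y => ¬ P₂ y), F y ≤ η/3 := by
    have hterm : ∀ y ∈ T.filter (fun y => ¬ P₂ y), F y ≤ 2*ε₁ := by
      intro y hy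
      rw [Finset.mem_filter, hTdef, Finset.mem_filter] at hy
      obtain ⟨⟨hyS, -⟩, hyP₂⟩ := hy
      rw [hP₂def] at hyP₂
      have hlt := h3 (fourierTheta L y) (hsupπ y hyS) hyP₂
      have hε₁half : ε₁ ≤ 1/2 := by rw [hε₁def]; exact min_le_right _ _
      have habs := abs_le.mp (le_of_lt hlt)
      have hDge : 1/2 ≤ 1 + lam' - φ (fourierTheta L y) := by linarith
      rw [hFdef]
      calc |φ (fourierTheta L y)| / (1 + lam' - φ (fourierTheta L y))
          ≤ ε₁ / (1/2) := div_le_div₀ hε₁.le hlt.le (by norm_num) hDge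
        _ = 2*ε₁ := by ring
    have hcard : ((T.filter (fun y => ¬ P₂ y)).card : ℝ) ≤ (L:ℝ)^2 := by
      have hc1 : (T.filter (fun y => ¬ P₂ y)).card ≤ (Tset L).card := by
        apply Finset.card_le_card
        intro y hy
        rw [Finset.mem_filter, hTdef, Finset.mem_filter] at hy
        have := hy.1.1
        rw [hSdef] at this
        exact Finset.mem_of_mem_erase this
      have hc2 : (Tset L).card = L^2 := by rw [hLk]; exact card_Tset_two_mul k
      calc ((T.filter (fun y => ¬ P₂ y)).card : ℝ) ≤ ((Tset L).card : ℝ) := by exact_mod_cast hc1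
        _ = (L:ℝ)^2 := by rw [hc2]; push_cast; ring
    have hsum : ∑ y ∈ T.filter (fun y => ¬ P₂ y), F y ≤ (L:ℝ)^2 * (2*ε₁) := by
      calc ∑ y ∈ T.filter (fun y => ¬ P₂ y), F y
          ≤ ∑ y ∈ T.filter (fun y => ¬ P₂ y), 2*ε₁ := Finset.sum_le_sum hterm
        _ = ((T.filter (fun y => ¬ P₂ y)).card : ℝ) * (2*ε₁) := by
            rw [Finset.sum_const, nsmul_eq_mul]
        _ ≤ (L:ℝ)^2 * (2*ε₁) := mul_le_mul_of_nonneg_right hcard (by positivity)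
    have hε₁η : ε₁ ≤ η/6 := by rw [hε₁def]; exact min_le_left _ _
    calc ((L:ℝ)^2)⁻¹ * ∑ y ∈ T.filter (fun y => ¬ P₂ y), F y
        ≤ ((L:ℝ)^2)⁻¹ * ((L:ℝ)^2 * (2*ε₁)) := mul_le_mul_of_nonneg_left hsum (by positivity)
      _ = 2*ε₁ := by field_simp
      _ ≤ η/3 := by linarith
  rw [hsplit, mul_add, mul_add]
  linarith [hb1, hb2, hb3]

end Core
section Final

lemma Enorm (m : ℕ) (qq : ℤ×ℤ → ℝ) (L : ℕ) (lam' : ℝ)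
    (hD : ∀ y : ℤ×ℤ, 0 < 1 + lam' - phiOf m qq (fourierTheta L y)) (x : ℤ×ℤ) :
    ‖((L:ℂ)^2)⁻¹ * ∑ y ∈ (Tset L).erase 0, eL L x y * ((phiOf m qq (fourierTheta L y) : ℂ) /
        ((1 + lam' - phiOf m qq (fourierTheta L y) : ℝ) : ℂ))‖
      ≤ ((L:ℝ)^2)⁻¹ * ∑ y ∈ (Tset L).erase 0, |phiOf m qq (fourierTheta L y)| /
          (1 + lam' - phiOf m qq (fourierTheta L y)) := by
  rw [norm_mul, norm_inv, norm_pow, Complex.norm_natCast]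
  apply mul_le_mul_of_nonneg_left _ (by positivity)
  calc ‖∑ y ∈ (Tset L).erase 0, eL L x y * ((phiOf m qq (fourierTheta L y) : ℂ) /
        ((1 + lam' - phiOf m qq (fourierTheta L y) : ℝ) : ℂ))‖
      ≤ ∑ y ∈ (Tset L).erase 0, ‖eL L x y * ((phiOf m qq (fourierTheta L y) : ℂ) /
        ((1 + lam' - phiOf m qq (fourierTheta L y) : ℝ) : ℂ))‖ := norm_sum_le _ _
    _ = ∑ y ∈ (Tset L).erase 0, |phiOf m qq (fourierTheta L y)| /
          (1 + lam' - phiOf m qq (fourierTheta L y)) := by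
        apply Finset.sum_congr rfl
        intro y _
        rw [norm_mul, norm_eL, one_mul, norm_div, Complex.norm_real, Complex.norm_real,
          Real.norm_eq_abs, Real.norm_eq_abs, abs_of_pos (hD y)]

end Final
/-- Theorem 1.2 (homogeneous-mixing exponential limit law): if (P0)–(P3) hold
and `M_L²/log L → ∞`, then for every `λ > 0`,
`sup_{x ∈ T'_L} |E_x(e^{−λH_L/L²}) − (1+λ)⁻¹| → 0`, where
`E_x(e^{−λH_L}) = G_L(x,λ)/G_L(0,λ)`. -/
theorem homogeneous_mixing_exp_law (M : ℕ → ℕ) (q : ℕ → ℤ × ℤ → ℝ) (σ2 : ℝ) (hσ : 0 < σ2)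
    (hMeven : ∀ L : ℕ, Even (M L) ∧ 0 < M L)
    (hP0 : ∀ L : ℕ, Even L → 0 < L → CondP0 (M L) (q L))
    (hP1 : CondP1 M q σ2) (hP2 : CondP2 M q) (hP3 : CondP3 M q)
    (hM2 : Tendsto (fun L : ℕ => (M L : ℝ) ^ 2 / Real.log L) evenAtTop atTop) :
    ∀ lam > (0 : ℝ), ∀ ε > (0 : ℝ), ∀ᶠ (L : ℕ) in evenAtTop, ∀ x ∈ (Tset L).erase 0,
      ‖Gfun M q L x (lam / (L : ℝ) ^ 2) / Gfun M q L 0 (lam / (L : ℝ) ^ 2)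
          - (((1 + lam)⁻¹ : ℝ) : ℂ)‖ < ε := by
  intro lam hlam ε hε
  set η : ℝ := min (1/(2*lam)) (ε/3) with hηdef
  have hη : 0 < η := lt_min (by positivity) (by positivity)
  have hcore := core_bound M q σ2 hσ (fun L => (hMeven L).2) hP0 hP1 hP2 hP3 hM2 lam hlam η hη
  filter_upwards [hcore, evenAtTop_even, evenAtTop_of_atTop (Filter.eventually_ge_atTop 1)]
    with L hcoreL hevenL hL1
  obtain ⟨k, hk⟩ := hevenL
  have hLk : L = 2*k := by omega
  subst hLk
  have hkpos : 0 < k := by omega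
  intro x hx
  have hP0L : CondP0 (M (2*k)) (q (2*k)) := hP0 (2*k) ⟨k, by ring⟩ (by omega)
  have hphi : ∀ θ : ℝ×ℝ, |phiOf (M (2*k)) (q (2*k)) θ| ≤ 1 := abs_phiOf_le_one _ _ hP0L
  have hxmem : x ∈ Tset ((2*k : ℕ) : ℝ) := Finset.mem_of_mem_erase hx
  have hxne : x ≠ 0 := (Finset.mem_erase.mp hx).1
  have hGx := Gfun_formula M q k hkpos hP0L lam hlam hphi x hxmem
  have hG0 := Gfun_formula M q k hkpos hP0L lam hlam hphi 0 (zero_mem_Tset k hkpos)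
  rw [if_neg hxne] at hGx
  rw [if_pos rfl] at hG0
  set lam' : ℝ := lam/(((2*k:ℕ)):ℝ)^2 with hl'def
  have hl'pos : 0 < lam' := by
    rw [hl'def]
    have : (0:ℝ) < ((2*k:ℕ):ℝ) := by exact_mod_cast (by omega : 0 < 2*k)
    positivity
  have hD : ∀ y : ℤ×ℤ, 0 < 1 + lam' - phiOf (M (2*k)) (q (2*k)) (fourierTheta (2*k) y) := by
    intro y
    have := abs_le.mp (hphi (fourierTheta (2*k) y))
    linarith [this.2]
  set Ex : ℂ := (((2*k:ℕ):ℂ)^2)⁻¹ * ∑ y ∈ (Tset ((2*k:ℕ):ℝ)).erase 0,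
      eL (2*k) x y * ((phiOf (M (2*k)) (q (2*k)) (fourierTheta (2*k) y) : ℂ) /
        ((1 + lam' - phiOf (M (2*k)) (q (2*k)) (fourierTheta (2*k) y) : ℝ) : ℂ)) with hExdef
  set E0 : ℂ := (((2*k:ℕ):ℂ)^2)⁻¹ * ∑ y ∈ (Tset ((2*k:ℕ):ℝ)).erase 0,
      eL (2*k) 0 y * ((phiOf (M (2*k)) (q (2*k)) (fourierTheta (2*k) y) : ℂ) /
        ((1 + lam' - phiOf (M (2*k)) (q (2*k)) (fourierTheta (2*k) y) : ℝ) : ℂ)) with hE0def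
  have hbound := hcoreL k rfl hkpos
  have hEx : ‖Ex‖ ≤ η := by
    rw [hExdef]
    exact le_trans (Enorm _ _ _ _ hD x) hbound
  have hE0 : ‖E0‖ ≤ η := by
    rw [hE0def]
    exact le_trans (Enorm _ _ _ _ hD 0) hbound
  set c : ℂ := (((1 + lam' : ℝ)):ℂ) with hcdef
  have hcne : c⁻¹ ≠ 0 := by
    apply inv_ne_zero
    rw [hcdef]
    exact_mod_cast Complex.ofReal_ne_zero.mpr (by linarith : (1 + lam' : ℝ) ≠ 0)
  set A : ℂ := 0 + (1:ℂ)/(lam:ℂ) + Ex with hAdef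
  set B : ℂ := 1 + (1:ℂ)/(lam:ℂ) + E0 with hBdef
  have hGx' : Gfun M q (2*k) x lam' = c⁻¹ * A := hGx
  have hG0' : Gfun M q (2*k) 0 lam' = c⁻¹ * B := hG0
  have hratio : Gfun M q (2*k) x lam' / Gfun M q (2*k) 0 lam' = A / B := by
    rw [hGx', hG0', mul_div_mul_left _ _ hcne]
  have hlamC : (lam:ℂ) ≠ 0 := Complex.ofReal_ne_zero.mpr hlam.ne'
  have h1lamC : ((1:ℂ) + (lam:ℂ)) ≠ 0 := by
    have : ((1:ℂ) + (lam:ℂ)) = (((1+lam : ℝ)):ℂ) := by push_cast; ring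
    rw [this]
    exact Complex.ofReal_ne_zero.mpr (by linarith : (1 + lam : ℝ) ≠ 0)
  set r : ℂ := (((1 + lam)⁻¹ : ℝ) : ℂ) with hrdef
  have hrval : r = ((1:ℂ) + (lam:ℂ))⁻¹ := by
    rw [hrdef]
    push_cast
    ring
  have hrnorm : ‖r‖ ≤ 1 := by
    rw [hrdef, Complex.norm_real, Real.norm_eq_abs, abs_of_pos (by positivity)]
    rw [inv_le_one_iff₀]
    right
    linarith
  have hkey : r * ((1:ℂ) + 1/(lam:ℂ)) = 1/(lam:ℂ) := by
    rw [hrval]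
    field_simp
    ring
  have hBnorm : 1 ≤ ‖B‖ := by
    have hre : B = (((1 + 1/lam : ℝ)):ℂ) + E0 := by
      rw [hBdef]
      push_cast
      ring
    have h1 : ‖(((1 + 1/lam : ℝ)):ℂ)‖ = 1 + 1/lam := by
      rw [Complex.norm_real, Real.norm_eq_abs, abs_of_pos (by positivity)]
    have h2 : ‖(((1 + 1/lam : ℝ)):ℂ) + E0‖ ≥ ‖(((1 + 1/lam : ℝ)):ℂ)‖ - ‖E0‖ := by
      have h3 : ‖(((1 + 1/lam : ℝ)):ℂ)‖ ≤ ‖(((1 + 1/lam : ℝ)):ℂ) + E0‖ + ‖E0‖ := by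
        have h4 := norm_add_le ((((1 + 1/lam : ℝ)):ℂ) + E0) (-E0)
        simpa using h4
      linarith
    have hηlam : η ≤ 1/(2*lam) := by rw [hηdef]; exact min_le_left _ _
    have hhalf : 1/(2*lam) < 1/lam := by
      apply div_lt_div_of_pos_left (by norm_num) hlam
      linarith
    rw [hre]
    calc (1:ℝ) ≤ (1 + 1/lam) - η := by
          have : η < 1/lam := lt_of_le_of_lt hηlam hhalf
          linarith
      _ ≤ ‖(((1 + 1/lam : ℝ)):ℂ)‖ - ‖E0‖ := by rw [h1]; linarith [hE0]
      _ ≤ ‖(((1 + 1/lam : ℝ)):ℂ) + E0‖ := h2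
  have hBne : B ≠ 0 := by
    intro hc
    rw [hc, norm_zero] at hBnorm
    linarith
  have hdiff : A / B - r = (A - r * B) / B := by
    field_simp
  have hnum : A - r * B = Ex - r * E0 := by
    rw [hAdef, hBdef]
    linear_combination -hkey
  have hnumnorm : ‖A - r * B‖ ≤ 2*η := by
    rw [hnum]
    calc ‖Ex - r * E0‖ ≤ ‖Ex‖ + ‖r * E0‖ := norm_sub_le _ _
      _ = ‖Ex‖ + ‖r‖ * ‖E0‖ := by rw [norm_mul r E0]
      _ ≤ η + 1 * η := by
          apply add_le_add hEx
          apply mul_le_mul hrnorm hE0 (norm_nonneg _) (by norm_num)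
      _ = 2*η := by ring
  have hfinal : ‖A / B - r‖ ≤ 2*η := by
    rw [hdiff, norm_div]
    calc ‖A - r * B‖ / ‖B‖ ≤ (2*η) / 1 :=
          div_le_div₀ (by positivity) hnumnorm (by norm_num) hBnorm
      _ = 2*η := by ring
  have hη3 : η ≤ ε/3 := by rw [hηdef]; exact min_le_right _ _
  calc ‖Gfun M q (2*k) x lam' / Gfun M q (2*k) 0 lam' - r‖ = ‖A / B - r‖ := by rw [hratio]
    _ ≤ 2*η := hfinal
    _ < ε := by linarith
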